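/- Let 1/k < p < 1 where k ≥ 3 is an integer. The function g̃(x) = (1-x)(1 + (p/(1-p))x)^(k-1) - 1 satisfies g̃(0) = 0, g̃(1) = -1, and has a unique zero in the open interval (0,1). -/

import Mathlib

open Real

theorem stmt4 (k : ℕ) (hk : 3 ≤ k) (p : ℝ) (hp : 1 / (k : ℝ) < p) (hp1 : p < 1)
    (g : ℝ → ℝ)
    (hg : ∀ x : ℝ, g x = (1 - x) * (1 + (p / (1 - p)) * x) ^ (k - 1) - 1) :
    g 0 = 0 ∧ g 1 = -1 ∧ ∃! x ∈ Set.Ioo (0:ℝ) 1, g x = 0 := by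
  have hk0 : (0:ℝ) < k := by positivity
  have hp0 : 0 < p := lt_trans (by positivity) hp
  have h1p : 0 < 1 - p := by linarith
  set a : ℝ := p / (1 - p) with ha_def
  have ha : 0 < a := div_pos hp0 h1p
  set m : ℕ := k - 1 with hm_def
  have hm2 : 2 ≤ m := by omega
  have hmk : (m:ℝ) + 1 = k := by exact_mod_cast (by omega : m + 1 = k)
  have hkp : 1 < (k:ℝ) * p := by rw [div_lt_iff₀ hk0] at hp; linarith
  have hma : 1 < (m:ℝ) * a := by
    have h : (m:ℝ) * a = ((m:ℝ) * p) / (1 - p) := by rw [ha_def]; ring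
    rw [h, lt_div_iff₀ h1p]; nlinarith
  -- the critical point
  set c : ℝ := ((m:ℝ) * a - 1) / (a * ((m:ℝ) + 1)) with hc_def
  have hden : 0 < a * ((m:ℝ) + 1) := by positivity
  have hc0 : 0 < c := div_pos (by linarith) hden
  have hc1 : c < 1 := by
    rw [hc_def, div_lt_one hden]; nlinarith
  -- derivative
  have hder : ∀ x : ℝ, HasDerivAt g
      ((1 + a * x) ^ (m - 1) * ((m:ℝ) * a * (1 - x) - (1 + a * x))) x := by
    intro x
    have h1 : HasDerivAt (fun x : ℝ => 1 - x) (-1) x := by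
      simpa using (hasDerivAt_id x).const_sub 1
    have h2 : HasDerivAt (fun x : ℝ => 1 + a * x) a x := by
      simpa using ((hasDerivAt_id x).const_mul a).const_add 1
    have h3 := h2.pow m
    have h4 := (h1.mul h3).sub_const 1
    have hfun : g = fun x : ℝ => (1 - x) * (1 + a * x) ^ m - 1 := funext hg
    rw [hfun]
    convert h4 using 1 <;> try rfl
    have hpow : (1 + a * x) ^ m = (1 + a * x) ^ (m - 1) * (1 + a * x) := by
      rw [← pow_succ]; congr 1; omega
    simp only [Pi.pow_apply]; rw [hpow]; ring
  have hdiff : Differentiable ℝ g := fun x => (hder x).differentiableAt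
  have hcont : Continuous g := hdiff.continuous
  -- rewrite the derivative sign using c
  have hsign : ∀ x : ℝ, (m:ℝ) * a * (1 - x) - (1 + a * x) = (a * ((m:ℝ) + 1)) * (c - x) := by
    intro x
    have : (a * ((m:ℝ) + 1)) * c = (m:ℝ) * a - 1 := by
      rw [hc_def]; field_simp
    nlinarith [this]
  have hderiv_eq : ∀ x : ℝ, deriv g x
      = (1 + a * x) ^ (m - 1) * ((a * ((m:ℝ) + 1)) * (c - x)) := by
    intro x; rw [(hder x).deriv, hsign x]
  -- monotonicity on [0,c]
  have hmono : StrictMonoOn g (Set.Icc 0 c) := by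
    apply strictMonoOn_of_deriv_pos (convex_Icc 0 c) hcont.continuousOn
    intro x hx
    rw [interior_Icc] at hx
    rw [hderiv_eq]
    have hx0 : 0 < x := hx.1
    have hxc : x < c := hx.2
    have hb : (0:ℝ) < 1 + a * x := by nlinarith
    exact mul_pos (pow_pos hb _) (mul_pos hden (by linarith))
  have hanti : StrictAntiOn g (Set.Icc c 1) := by
    apply strictAntiOn_of_deriv_neg (convex_Icc c 1) hcont.continuousOn
    intro x hx
    rw [interior_Icc] at hx
    rw [hderiv_eq]
    have hx0 : 0 < x := lt_trans hc0 hx.1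
    have hb : (0:ℝ) < 1 + a * x := by nlinarith
    have h1 : (0:ℝ) < (1 + a * x) ^ (m - 1) := by positivity
    have h2 : (a * ((m:ℝ) + 1)) * (c - x) < 0 :=
      mul_neg_of_pos_of_neg hden (by linarith [hx.1])
    exact mul_neg_of_pos_of_neg h1 h2
  have hg0 : g 0 = 0 := by rw [hg]; simp
  have hg1 : g 1 = -1 := by rw [hg]; simp
  have hgc : 0 < g c := by
    have := hmono (Set.left_mem_Icc.mpr hc0.le) (Set.right_mem_Icc.mpr hc0.le) hc0
    rwa [hg0] at this
  -- existence of zero in (c,1)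
  have hiv : (0:ℝ) ∈ Set.Ioo (g 1) (g c) := ⟨by rw [hg1]; norm_num, hgc⟩
  obtain ⟨z, hz, hgz⟩ := intermediate_value_Ioo' hc1.le hcont.continuousOn hiv
  refine ⟨hg0, hg1, z, ⟨⟨lt_trans hc0 hz.1, hz.2⟩, hgz⟩, ?_⟩
  rintro y ⟨⟨hy0, hy1⟩, hgy⟩
  by_cases hyc : y ≤ c
  · exfalso
    have := hmono (Set.left_mem_Icc.mpr hc0.le) ⟨hy0.le, hyc⟩ hy0
    rw [hg0, hgy] at this; exact lt_irrefl 0 this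
  · push_neg at hyc
    exact hanti.injOn ⟨hyc.le, hy1.le⟩ ⟨hz.1.le, hz.2.le⟩ (by rw [hgy, hgz])
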